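/- Suppose k is algebraically closed of characteristic 0. Let F be a polynomial function on gl_n(k) × V* × V such that F(gXg⁻¹, λg⁻¹, gv) = F(X,λ,v) for every invertible n×n matrix g, and F(X + wλ − vν, λ, v) = F(X,λ,v) for every column vector w ∈ V and row vector ν ∈ V* (here wλ and vν denote the rank-one n×n matrices obtained as column-times-row products). Then F belongs to the k-subalgebra of polynomial functions generated by f_0, f_1, …, f_{n−1}. -/

import Mathlib

open Matrix

/-- `Q X j` is defined by `det (t•I - X) = ∑ j, (-1)^j * Q j X * t^(n-j)`. -/
noncomputable def QQ {R : Type*} [CommRing R] {n : ℕ} (X : Matrix (Fin n) (Fin n) R)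
    (j : ℕ) : R :=
  (-1) ^ j * X.charpoly.coeff (n - j)

/-- `B X k = X^k - Q₁(X)•X^(k-1) + Q₂(X)•X^(k-2) - ⋯ + (-1)^k Q_k(X)•I`. -/
noncomputable def BB {R : Type*} [CommRing R] {n : ℕ} (X : Matrix (Fin n) (Fin n) R)
    (k : ℕ) : Matrix (Fin n) (Fin n) R :=
  ∑ i ∈ Finset.range (k + 1), ((-1) ^ i * QQ X i) • X ^ (k - i)

/-- `fdef X λ v k = λ ⬝ B_k(X) ⬝ v`. -/
noncomputable def fdef {R : Type*} [CommRing R] {n : ℕ} (X : Matrix (Fin n) (Fin n) R)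
    (l v : Fin n → R) (k : ℕ) : R :=
  l ⬝ᵥ (BB X k).mulVec v

/-- Evaluation of a polynomial in the `n² + 2n` variables (entries of `X`, `λ`, `v`)
at a point `(X, λ, v)` of `gl_n(K) × V* × V`. -/
noncomputable def evP {K : Type*} [Field K] {n : ℕ}
    (X : Matrix (Fin n) (Fin n) K) (l v : Fin n → K)
    (F : MvPolynomial ((Fin n × Fin n) ⊕ (Fin n) ⊕ (Fin n)) K) : K :=
  MvPolynomial.eval (Sum.elim (fun p => X p.1 p.2) (Sum.elim l v)) F


section aux

lemma dot_sum_mulVec {R : Type*} [CommRing R] {n : ℕ} (l v : Fin n → R) {ι : Type*}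
    (s : Finset ι) (M : ι → Matrix (Fin n) (Fin n) R) :
    l ⬝ᵥ (∑ i ∈ s, M i).mulVec v = ∑ i ∈ s, l ⬝ᵥ (M i).mulVec v :=
  map_sum (AddMonoidHom.mk' (fun A : Matrix (Fin n) (Fin n) R => l ⬝ᵥ A.mulVec v)
    (by intro A B; show l ⬝ᵥ (A+B) *ᵥ v = _; rw [Matrix.add_mulVec, dotProduct_add])) M s

-- ringhom commutes with fdef
lemma map_fdef {R S : Type*} [CommRing R] [CommRing S] (f : R →+* S) {n : ℕ}
    (X : Matrix (Fin n) (Fin n) R) (l v : Fin n → R) (k : ℕ) :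
    f (fdef X l v k) = fdef (X.map f) (f ∘ l) (f ∘ v) k := by
  have hBB : (BB X k).map f = BB (X.map f) k := by
    ext i j
    simp only [BB, Matrix.map_apply, Matrix.sum_apply, map_sum, Matrix.smul_apply, smul_eq_mul]
    refine Finset.sum_congr rfl fun m _ => ?_
    have h1 : f ((X ^ (k - m)) i j) = ((X.map f) ^ (k - m)) i j := by
      have := congrArg (fun M => M i j) (map_pow (f.mapMatrix) X (k - m))
      simpa using this
    have h2 : f ((-1) ^ m * QQ X m) = (-1) ^ m * QQ (X.map f) m := by
      simp [QQ, Matrix.charpoly_map, Polynomial.coeff_map]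
    rw [f.map_mul, h1, h2]
  have hmv : f ∘ ((BB X k).mulVec v) = ((BB X k).map f).mulVec (f ∘ v) := by
    funext i; exact f.map_mulVec _ _ i
  rw [fdef, fdef, RingHom.map_dotProduct, hmv, hBB]

-- expansion of fdef
lemma fdef_eq {R : Type*} [CommRing R] {n : ℕ} (X : Matrix (Fin n) (Fin n) R)
    (l v : Fin n → R) (k : ℕ) :
    fdef X l v k = ∑ i ∈ Finset.range (k + 1),
      X.charpoly.coeff (n - i) * (l ⬝ᵥ (X ^ (k - i)).mulVec v) := by
  simp only [fdef, BB, QQ]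
  rw [dot_sum_mulVec]
  refine Finset.sum_congr rfl fun m _ => ?_
  rw [Matrix.smul_mulVec, dotProduct_smul]
  have : (-1 : R) ^ m * ((-1) ^ m * X.charpoly.coeff (n - m)) = X.charpoly.coeff (n - m) := by
    rw [← mul_assoc, ← pow_add, Even.neg_one_pow ⟨m, rfl⟩, one_mul]
  rw [smul_eq_mul, this]

-- Cayley-Hamilton consequence
lemma CHpow {K : Type*} [Field K] {n : ℕ} (X : Matrix (Fin n) (Fin n) K) :
    X ^ n = ∑ j ∈ Finset.range n, (-(X.charpoly.coeff j)) • X ^ j := by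
  have hdeg : X.charpoly.natDegree = n := by
    rw [Matrix.charpoly_natDegree_eq_dim, Fintype.card_fin]
  have h0 := Matrix.aeval_self_charpoly X
  rw [Polynomial.aeval_eq_sum_range' (n := n + 1) (by omega) X] at h0
  rw [Finset.sum_range_succ] at h0
  have hc : X.charpoly.coeff n = 1 := by
    have := (Matrix.charpoly_monic X).coeff_natDegree
    rwa [hdeg] at this
  rw [hc, one_smul] at h0
  have := eq_neg_of_add_eq_zero_right h0
  rw [this, ← Finset.sum_neg_distrib]
  exact Finset.sum_congr rfl fun j _ => (neg_smul _ _).symm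

noncomputable section
variable {K : Type*} [Field K] {n : ℕ}

def Jmat (K : Type*) [CommRing K] (n : ℕ) : Matrix (Fin n) (Fin n) K :=
  of fun i j => if (i : ℕ) = (j : ℕ) + 1 then 1 else 0

def e0v (K : Type*) [CommRing K] (n : ℕ) : Fin n → K :=
  fun i => if (i : ℕ) = 0 then 1 else 0

def g0m {R : Type*} [CommRing R] {m : ℕ} (X : Matrix (Fin m) (Fin m) R) (v : Fin m → R) :
    Matrix (Fin m) (Fin m) R :=
  of fun i j => ((X ^ (j : ℕ)).mulVec v) i

def Ccm (K : Type*) [CommRing K] (n : ℕ) (p : ℕ → K) : Matrix (Fin n) (Fin n) K :=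
  of fun i j => if (j : ℕ) = n - 1 then -p i else if (i : ℕ) = (j : ℕ) + 1 then 1 else 0

def Bmt (K : Type*) [CommRing K] (n : ℕ) (p : ℕ → K) : Matrix (Fin n) (Fin n) K :=
  of fun i j => if (i : ℕ) = (j : ℕ) then 1 else if (i : ℕ) < (j : ℕ) then p (n - j + i) else 0

def sv (K : Type*) [CommRing K] (n : ℕ) (p : ℕ → K) : Fin n → K :=
  fun i => -p (n - 1 - i)

lemma sum_pick (f : Fin n → K) (m : ℕ) (hm : m < n) :
    (∑ k : Fin n, f k * (if (k : ℕ) = m then 1 else 0)) = f ⟨m, hm⟩ := by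
  have h : ∀ k : Fin n, ((k : ℕ) = m) = (k = ⟨m, hm⟩) := fun k => by
    simp [Fin.ext_iff]
  simp_rw [h, mul_ite, mul_one, mul_zero, Finset.sum_ite_eq', Finset.mem_univ, if_true]

lemma g0m_e0 (hn : 0 < n) (X : Matrix (Fin n) (Fin n) K) (v : Fin n → K) :
    (g0m X v).mulVec (e0v K n) = v := by
  funext i
  rw [mulVec, dotProduct]
  show (∑ k : Fin n, (g0m X v) i k * (if (k:ℕ) = 0 then 1 else 0)) = v i
  rw [sum_pick _ 0 hn]
  simp [g0m]

lemma Bmt_e0 (hn : 0 < n) (p : ℕ → K) :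
    (Bmt K n p).mulVec (e0v K n) = e0v K n := by
  funext i
  rw [mulVec, dotProduct]
  show (∑ k : Fin n, (Bmt K n p) i k * (if (k:ℕ) = 0 then 1 else 0)) = _
  rw [sum_pick _ 0 hn]
  simp only [Bmt, e0v, of_apply, Fin.val_mk]
  split_ifs <;> first | rfl | omega

lemma det_Bmt (p : ℕ → K) : (Bmt K n p).det = 1 := by
  rw [Matrix.det_of_upperTriangular]
  · simp [Bmt]
  · intro i j hij
    have h : (j : ℕ) < (i : ℕ) := hij
    simp only [Bmt, of_apply]
    rw [if_neg (by omega), if_neg (by omega)]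

-- Cayley-Hamilton consequence, vector form at index i
lemma CHpow' (X : Matrix (Fin n) (Fin n) K) (v : Fin n → K) (i : Fin n) :
    ((X ^ n).mulVec v) i = ∑ m ∈ Finset.range n, -(X.charpoly.coeff m) * ((X ^ m).mulVec v) i := by
  rw [CHpow X, mulVec, dotProduct]
  simp only [Matrix.sum_apply, Finset.sum_mul, Matrix.smul_apply, smul_eq_mul]
  rw [Finset.sum_comm]
  refine Finset.sum_congr rfl fun m _ => ?_
  rw [mulVec, dotProduct, Finset.mul_sum]
  exact Finset.sum_congr rfl fun k _ => by ring

lemma I1 (hn : 0 < n) (X : Matrix (Fin n) (Fin n) K) (v : Fin n → K) :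
    X * g0m X v = g0m X v * Ccm K n (fun j => X.charpoly.coeff j) := by
  ext i j
  have lhs : (X * g0m X v) i j = ((X ^ ((j : ℕ) + 1)).mulVec v) i := by
    rw [mul_apply]
    simp only [g0m, of_apply]
    rw [pow_succ']
    rw [← Matrix.mulVec_mulVec]
    rfl
  rw [lhs, mul_apply]
  by_cases hj : (j : ℕ) = n - 1
  · have hcol : ∀ k : Fin n, Ccm K n (fun j => X.charpoly.coeff j) k j
        = -(X.charpoly.coeff k) := fun k => by simp [Ccm, hj]
    simp_rw [hcol]
    have hj1 : (j : ℕ) + 1 = n := by omega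
    rw [hj1, CHpow' X v i]
    rw [← Fin.sum_univ_eq_sum_range (fun m => -(X.charpoly.coeff m) * ((X ^ m).mulVec v) i) n]
    refine Finset.sum_congr rfl fun k _ => ?_
    simp [g0m]; ring
  · have hcol : ∀ k : Fin n, Ccm K n (fun j => X.charpoly.coeff j) k j
        = if (k : ℕ) = (j : ℕ) + 1 then 1 else 0 := fun k => by simp [Ccm, hj]
    simp_rw [hcol]
    have hjn : (j : ℕ) + 1 < n := by have := j.isLt; omega
    rw [sum_pick (fun k => g0m X v i k) ((j : ℕ) + 1) hjn]
    simp [g0m]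

lemma sum_pick' (f : Fin n → K) (m : ℕ) (hm : m < n) :
    (∑ k : Fin n, if (k : ℕ) = m then f k else 0) = f ⟨m, hm⟩ := by
  have h : ∀ k : Fin n, ((k : ℕ) = m) = (k = ⟨m, hm⟩) := fun k => by simp [Fin.ext_iff]
  simp_rw [h, Finset.sum_ite_eq', Finset.mem_univ, if_true]

lemma sum_pick_zero (f : Fin n → K) (m : ℕ) (hm : n ≤ m) :
    (∑ k : Fin n, if (k : ℕ) = m then f k else 0) = 0 :=
  Finset.sum_eq_zero fun k _ => by rw [if_neg (by have := k.isLt; omega)]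

lemma I3 (hn : 0 < n) (p : ℕ → K) :
    Ccm K n p * Bmt K n p = Bmt K n p * Jmat K n + vecMulVec (e0v K n) (sv K n p) := by
  ext i k
  have hi' := i.isLt
  have hk' := k.isLt
  -- LHS
  have hsplit : ∀ j : Fin n, Ccm K n p i j * Bmt K n p j k
      = (if (j : ℕ) = n - 1 then (-p i) * Bmt K n p j k else 0)
      + (if ((j : ℕ) + 1 = (i : ℕ) ∧ ¬ ((j : ℕ) = n - 1)) then Bmt K n p j k else 0) := by
    intro j
    simp only [Ccm, of_apply]
    by_cases h1 : (j : ℕ) = n - 1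
    · simp [h1]
    · by_cases h2 : (i : ℕ) = (j : ℕ) + 1
      · simp [h1, h2]
      · rw [if_neg h1, if_neg h2, if_neg h1, if_neg (by omega)]; ring
  have lhs : (Ccm K n p * Bmt K n p) i k
      = (-p i) * Bmt K n p ⟨n - 1, by omega⟩ k
        + (∑ j : Fin n, if ((j : ℕ) + 1 = (i : ℕ) ∧ ¬ ((j : ℕ) = n - 1)) then Bmt K n p j k else 0) := by
    rw [mul_apply]
    simp_rw [hsplit]
    rw [Finset.sum_add_distrib]
    congr 1
    exact sum_pick' (fun j => (-p i) * Bmt K n p j k) (n - 1) (by omega)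
  -- second piece of LHS
  have lhs2 : (∑ j : Fin n, if ((j : ℕ) + 1 = (i : ℕ) ∧ ¬ ((j : ℕ) = n - 1)) then Bmt K n p j k else 0)
      = (if h : 1 ≤ (i : ℕ) then Bmt K n p ⟨(i : ℕ) - 1, by omega⟩ k else 0) := by
    split
    · rename_i hi1
      have hcond : ∀ j : Fin n, (((j : ℕ) + 1 = (i : ℕ) ∧ ¬ ((j : ℕ) = n - 1))) = ((j : ℕ) = (i : ℕ) - 1) := by
        intro j; have := j.isLt
        apply propext; constructor
        · rintro ⟨h1, _⟩; omega
        · intro h1; constructor <;> omega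
      simp_rw [hcond]
      exact sum_pick' (fun j => Bmt K n p j k) ((i : ℕ) - 1) (by omega)
    · rename_i hi1
      exact Finset.sum_eq_zero fun j _ => by rw [if_neg (by omega)]
  -- RHS
  have rhs1 : (Bmt K n p * Jmat K n) i k
      = (if h : (k : ℕ) + 1 < n then Bmt K n p i ⟨(k : ℕ) + 1, h⟩ else 0) := by
    rw [mul_apply]
    have : ∀ j : Fin n, Bmt K n p i j * Jmat K n j k
        = (if (j : ℕ) = (k : ℕ) + 1 then Bmt K n p i j else 0) := by
      intro j
      simp only [Jmat, of_apply, mul_ite, mul_one, mul_zero]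
    simp_rw [this]
    split
    · exact sum_pick' (fun j => Bmt K n p i j) ((k : ℕ) + 1) (by omega)
    · exact sum_pick_zero (fun j => Bmt K n p i j) ((k : ℕ) + 1) (by omega)
  rw [Matrix.add_apply, vecMulVec_apply, lhs, lhs2, rhs1]
  by_cases hk : (k : ℕ) = n - 1 <;> by_cases hi : (i : ℕ) = 0
  · -- k last, i = 0
    rw [dif_neg (by omega), dif_neg (by omega)]
    have hB : Bmt K n p ⟨n - 1, by omega⟩ k = 1 := by
      simp only [Bmt, of_apply, Fin.val_mk]; rw [if_pos (by omega)]
    have h0 : e0v K n i = 1 := by simp only [e0v]; rw [if_pos hi]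
    have hs : sv K n p k = -p (i : ℕ) := by
      have h2 : n - 1 - (k : ℕ) = (i : ℕ) := by omega
      simp only [sv, h2]
    rw [hB, h0, hs]; ring
  · -- k last, i ≥ 1
    rw [dif_pos (by omega), dif_neg (by omega)]
    have hB1 : Bmt K n p ⟨n - 1, by omega⟩ k = 1 := by
      simp only [Bmt, of_apply, Fin.val_mk]; rw [if_pos (by omega)]
    have hB2 : Bmt K n p ⟨(i : ℕ) - 1, by omega⟩ k = p (i : ℕ) := by
      simp only [Bmt, of_apply, Fin.val_mk]
      rw [if_neg (by omega), if_pos (by omega)]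
      congr 1; omega
    have h0 : e0v K n i = 0 := by simp only [e0v]; rw [if_neg hi]
    rw [hB1, hB2, h0]; ring
  · -- k not last, i = 0
    rw [dif_neg (by omega), dif_pos (by omega)]
    have hB1 : Bmt K n p ⟨n - 1, by omega⟩ k = 0 := by
      simp only [Bmt, of_apply, Fin.val_mk]
      rw [if_neg (by omega), if_neg (by omega)]
    have hB2 : Bmt K n p i ⟨(k : ℕ) + 1, by omega⟩ = p (n - 1 - (k : ℕ)) := by
      simp only [Bmt, of_apply, Fin.val_mk]
      rw [if_neg (by omega), if_pos (by omega)]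
      congr 1; omega
    have h0 : e0v K n i = 1 := by simp only [e0v]; rw [if_pos hi]
    have hs : sv K n p k = -p (n - 1 - (k : ℕ)) := rfl
    rw [hB1, hB2, h0, hs]; ring
  · -- k not last, i ≥ 1
    rw [dif_pos (by omega), dif_pos (by omega)]
    have hB1 : Bmt K n p ⟨n - 1, by omega⟩ k = 0 := by
      simp only [Bmt, of_apply, Fin.val_mk]
      rw [if_neg (by omega), if_neg (by omega)]
    have h0 : e0v K n i = 0 := by simp only [e0v]; rw [if_neg hi]
    have hBB : Bmt K n p ⟨(i : ℕ) - 1, by omega⟩ k = Bmt K n p i ⟨(k : ℕ) + 1, by omega⟩ := by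
      simp only [Bmt, of_apply, Fin.val_mk]
      split_ifs <;> first | rfl | (exfalso; omega) | (congr 1; omega)
    rw [hB1, h0, hBB]; ring

lemma mu_eq_aux (hn : 0 < n) (X : Matrix (Fin n) (Fin n) K) (l v : Fin n → K) (k : Fin n) :
    vecMul (vecMul l (g0m X v)) (Bmt K n (fun j => X.charpoly.coeff j)) k
      = ∑ i ∈ Finset.range ((k : ℕ) + 1),
          X.charpoly.coeff (n - i) * (l ⬝ᵥ (X ^ ((k : ℕ) - i)).mulVec v) := by
  set p : ℕ → K := fun j => X.charpoly.coeff j with hp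
  set lam : ℕ → K := fun m => l ⬝ᵥ (X ^ m).mulVec v with hlam
  have hk' := k.isLt
  have hmonic : p n = 1 := by
    have hdeg : X.charpoly.natDegree = n := by
      rw [Matrix.charpoly_natDegree_eq_dim, Fintype.card_fin]
    have := (Matrix.charpoly_monic X).coeff_natDegree
    rw [hdeg] at this
    simpa [hp] using this
  have hlamj : ∀ j : Fin n, (vecMul l (g0m X v)) j = lam (j : ℕ) := by
    intro j
    simp only [vecMul, dotProduct, g0m, of_apply, hlam, mulVec]
  have lhs0 : vecMul (vecMul l (g0m X v)) (Bmt K n p) k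
      = ∑ j : Fin n, lam (j : ℕ) * Bmt K n p j k := by
    simp only [vecMul, dotProduct]
    exact Finset.sum_congr rfl fun j _ => by
      have h := hlamj j; simp only [vecMul, dotProduct] at h; rw [h]
  rw [lhs0]
  have hterm : ∀ j : Fin n, lam (j : ℕ) * Bmt K n p j k
      = (if (j : ℕ) = (k : ℕ) then lam (j : ℕ) else 0)
        + (if (j : ℕ) < (k : ℕ) then lam (j : ℕ) * p (n - k + j) else 0) := by
    intro j
    simp only [Bmt, of_apply]
    by_cases h1 : (j : ℕ) = (k : ℕ)
    · rw [if_pos h1, if_pos h1, if_neg (by omega), mul_one, add_zero]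
    · rw [if_neg h1, if_neg h1, zero_add]
      by_cases h2 : (j : ℕ) < (k : ℕ)
      · rw [if_pos h2, if_pos h2]
      · rw [if_neg h2, if_neg h2, mul_zero]
  simp_rw [hterm]
  rw [Finset.sum_add_distrib, sum_pick' (fun j => lam (j : ℕ)) (k : ℕ) hk']
  -- second sum to range
  have h2 : (∑ j : Fin n, if (j : ℕ) < (k : ℕ) then lam (j : ℕ) * p (n - k + j) else 0)
      = ∑ m ∈ Finset.range (k : ℕ), lam m * p (n - k + m) := by
    rw [Fin.sum_univ_eq_sum_range (fun m => if m < (k : ℕ) then lam m * p (n - k + m) else 0) n]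
    rw [← Finset.sum_subset (Finset.range_subset_range.2 (le_of_lt hk'))
      (fun x _ hx => by rw [if_neg (by simp at hx ⊢; omega)])]
    exact Finset.sum_congr rfl fun m hm => by rw [if_pos (by simp at hm; omega)]
  rw [h2]
  -- RHS: peel i = 0
  rw [Finset.sum_range_succ' (fun i => X.charpoly.coeff (n - i) * (l ⬝ᵥ (X ^ ((k : ℕ) - i)).mulVec v)) (k : ℕ)]
  have h3 : X.charpoly.coeff (n - 0) * (l ⬝ᵥ (X ^ ((k : ℕ) - 0)).mulVec v) = lam (k : ℕ) := by
    simp only [Nat.sub_zero]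
    rw [show X.charpoly.coeff n = 1 from hmonic, one_mul, hlam]
  rw [h3, add_comm]
  congr 1
  -- reflect
  rw [← Finset.sum_range_reflect (fun m => lam m * p (n - (k : ℕ) + m)) (k : ℕ)]
  refine Finset.sum_congr rfl fun i hi => ?_
  simp only [Finset.mem_range] at hi
  have e1 : (k : ℕ) - 1 - i = (k : ℕ) - (i + 1) := by omega
  have e2 : n - (k : ℕ) + ((k : ℕ) - 1 - i) = n - (i + 1) := by omega
  rw [e2, e1, mul_comm]

lemma vecMulVec_mul' (a b : Fin n → K) (M : Matrix (Fin n) (Fin n) K) :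
    vecMulVec a b * M = vecMulVec a (vecMul b M) := by
  ext i j
  simp only [vecMulVec_apply, mul_apply, vecMul, dotProduct, Finset.mul_sum]
  exact Finset.sum_congr rfl fun k _ => by ring

lemma key {K : Type*} [Field K] {n : ℕ} (hn : 0 < n)
    (F : MvPolynomial ((Fin n × Fin n) ⊕ (Fin n) ⊕ (Fin n)) K)
    (hGL : ∀ g : GL (Fin n) K, ∀ (X : Matrix (Fin n) (Fin n) K) (l v : Fin n → K),
      evP ((g : Matrix (Fin n) (Fin n) K) * X * ((g⁻¹ : GL (Fin n) K) : Matrix (Fin n) (Fin n) K))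
        (vecMul l ((g⁻¹ : GL (Fin n) K) : Matrix (Fin n) (Fin n) K))
        (mulVec (g : Matrix (Fin n) (Fin n) K) v) F = evP X l v F)
    (htrans : ∀ (X : Matrix (Fin n) (Fin n) K) (l v w nu : Fin n → K),
      evP (X + vecMulVec w l - vecMulVec v nu) l v F = evP X l v F)
    (X : Matrix (Fin n) (Fin n) K) (l v : Fin n → K)
    (h : IsUnit (g0m X v)) :
    evP X l v F = evP (Jmat K n) (fun k : Fin n => fdef X l v (k : ℕ)) (e0v K n) F := by
  set p : ℕ → K := fun j => X.charpoly.coeff j with hp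
  obtain ⟨u, hu⟩ := h
  -- step 1 : conjugation by u⁻¹
  have step1 := hGL u⁻¹ X l v
  rw [inv_inv] at step1
  have hC : ((u⁻¹ : GL (Fin n) K) : Matrix (Fin n) (Fin n) K) * X * (u : Matrix (Fin n) (Fin n) K)
      = Ccm K n p := by
    have h1 : X * (u : Matrix (Fin n) (Fin n) K) = (u : Matrix (Fin n) (Fin n) K) * Ccm K n p := by
      rw [hu]; exact I1 hn X v
    calc (↑u⁻¹ : Matrix (Fin n) (Fin n) K) * X * ↑u = ↑u⁻¹ * (X * ↑u) := by rw [mul_assoc]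
    _ = ↑u⁻¹ * (↑u * Ccm K n p) := by rw [h1]
    _ = ((↑u⁻¹ : Matrix (Fin n) (Fin n) K) * ↑u) * Ccm K n p := by rw [mul_assoc]
    _ = Ccm K n p := by rw [Units.inv_mul, one_mul]
  have hv : mulVec ((u⁻¹ : GL (Fin n) K) : Matrix (Fin n) (Fin n) K) v = e0v K n := by
    have h2 : v = mulVec (u : Matrix (Fin n) (Fin n) K) (e0v K n) := by
      rw [hu, g0m_e0 hn]
    rw [h2, Matrix.mulVec_mulVec, Units.inv_mul, Matrix.one_mulVec]
  rw [hC, hv] at step1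
  -- step 2 : translation
  set nu : Fin n → K := vecMul (sv K n p) (Bmt K n p)⁻¹ with hnu
  have step2 := htrans (Ccm K n p) (vecMul l (u : Matrix (Fin n) (Fin n) K)) (e0v K n) 0 nu
  have hz : vecMulVec (0 : Fin n → K) (vecMul l (u : Matrix (Fin n) (Fin n) K)) = 0 := by
    ext i j; simp [vecMulVec]
  rw [hz, add_zero] at step2
  set M : Matrix (Fin n) (Fin n) K := Ccm K n p - vecMulVec (e0v K n) nu with hM
  -- step 3 : conjugation by the unit of Bmt
  have hdetB : IsUnit (Bmt K n p).det := by rw [det_Bmt]; exact isUnit_one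
  obtain ⟨w, hw⟩ := (Matrix.isUnit_iff_isUnit_det _).2 hdetB
  have hnuB : vecMul nu (Bmt K n p) = sv K n p := by
    rw [hnu, vecMul_vecMul, Matrix.nonsing_inv_mul _ hdetB, vecMul_one]
  have hMB : M * Bmt K n p = Bmt K n p * Jmat K n := by
    rw [hM, Matrix.sub_mul, I3 hn p, vecMulVec_mul', hnuB, add_sub_cancel_right]
  have step3 := hGL w⁻¹ M (vecMul l (u : Matrix (Fin n) (Fin n) K)) (e0v K n)
  rw [inv_inv] at step3
  have hJ : ((w⁻¹ : GL (Fin n) K) : Matrix (Fin n) (Fin n) K) * M * (w : Matrix (Fin n) (Fin n) K)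
      = Jmat K n := by
    have h1 : M * (w : Matrix (Fin n) (Fin n) K) = (w : Matrix (Fin n) (Fin n) K) * Jmat K n := by
      rw [hw]; exact hMB
    calc (↑w⁻¹ : Matrix (Fin n) (Fin n) K) * M * ↑w = ↑w⁻¹ * (M * ↑w) := by rw [mul_assoc]
    _ = ↑w⁻¹ * (↑w * Jmat K n) := by rw [h1]
    _ = ((↑w⁻¹ : Matrix (Fin n) (Fin n) K) * ↑w) * Jmat K n := by rw [mul_assoc]
    _ = Jmat K n := by rw [Units.inv_mul, one_mul]
  have hvw : mulVec ((w⁻¹ : GL (Fin n) K) : Matrix (Fin n) (Fin n) K) (e0v K n) = e0v K n := by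
    conv_lhs => rw [← Bmt_e0 hn p, ← hw]
    rw [Matrix.mulVec_mulVec, Units.inv_mul, Matrix.one_mulVec]
  have hmu : vecMul (vecMul l (u : Matrix (Fin n) (Fin n) K)) (w : Matrix (Fin n) (Fin n) K)
      = fun k : Fin n => fdef X l v (k : ℕ) := by
    rw [hw, hu]
    funext k
    rw [mu_eq_aux hn X l v k, ← fdef_eq]
  rw [hJ, hvw, hmu] at step3
  rw [← step1, ← step2, ← step3]

section helpers
open Matrix
variable {R S : Type*} [CommRing R] [CommRing S]

lemma aeval_eq_eval' {σ : Type*} {K : Type*} [CommSemiring K] (g : σ → K)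
    (p : MvPolynomial σ K) : MvPolynomial.aeval g p = MvPolynomial.eval g p := by
  rw [← MvPolynomial.coe_aeval_eq_eval]; rfl

lemma map_g0m (f : R →+* S) {m : ℕ} (X : Matrix (Fin m) (Fin m) R) (v : Fin m → R) :
    (g0m X v).map f = g0m (X.map f) (f ∘ v) := by
  ext i j
  simp only [g0m, Matrix.map_apply, of_apply]
  rw [f.map_mulVec]
  have hp : (X ^ (j : ℕ)).map f = (X.map f) ^ (j : ℕ) := by
    have := map_pow f.mapMatrix X (j : ℕ)
    simpa [RingHom.mapMatrix_apply] using this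
  rw [hp]

lemma g0m_Jmat {K : Type*} [Field K] {n : ℕ} (hn : 0 < n) :
    g0m (Jmat K n) (e0v K n) = (1 : Matrix (Fin n) (Fin n) K) := by
  have hpow : ∀ m : ℕ, m < n →
      ((Jmat K n) ^ m).mulVec (e0v K n) = fun i : Fin n => (if (i : ℕ) = m then (1:K) else 0) := by
    intro m
    induction m with
    | zero => intro _; rw [pow_zero, Matrix.one_mulVec]; rfl
    | succ m ih =>
      intro hm
      rw [pow_succ', ← Matrix.mulVec_mulVec, ih (by omega)]
      funext i
      rw [mulVec, dotProduct]
      rw [sum_pick (fun k => Jmat K n i k) m (by omega)]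
      simp only [Jmat, of_apply, Fin.val_mk]
  ext i j
  have h := congrFun (hpow (j : ℕ) j.isLt) i
  simp only [g0m, of_apply]
  rw [h, Matrix.one_apply]
  by_cases hij : i = j
  · rw [if_pos (by rw [hij]), if_pos hij]
  · rw [if_neg (by simp [Fin.ext_iff] at hij ⊢; omega), if_neg hij]
end helpers

end
end aux

/-- if a polynomial function `F` on `gl_n(k) × V* × V` is invariant under
the coadjoint action of `GL_n ⋉ (V ⊕ V*)`, then `F` lies in the subalgebra generated by
`f_0, …, f_{n-1}` (char 0, algebraically closed). -/
theorem stmt_1 {K : Type*} [Field K] [IsAlgClosed K] [CharZero K] {n : ℕ} (hn : 1 ≤ n)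
    (F : MvPolynomial ((Fin n × Fin n) ⊕ (Fin n) ⊕ (Fin n)) K)
    (hGL : ∀ g : GL (Fin n) K, ∀ (X : Matrix (Fin n) (Fin n) K) (l v : Fin n → K),
      evP ((g : Matrix (Fin n) (Fin n) K) * X * ((g⁻¹ : GL (Fin n) K) : Matrix (Fin n) (Fin n) K))
        (vecMul l ((g⁻¹ : GL (Fin n) K) : Matrix (Fin n) (Fin n) K))
        (mulVec (g : Matrix (Fin n) (Fin n) K) v) F = evP X l v F)
    (htrans : ∀ (X : Matrix (Fin n) (Fin n) K) (l v w nu : Fin n → K),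
      evP (X + vecMulVec w l - vecMulVec v nu) l v F = evP X l v F) :
    F ∈ Algebra.adjoin K (Set.range fun j : Fin n =>
      fdef (R := MvPolynomial ((Fin n × Fin n) ⊕ (Fin n) ⊕ (Fin n)) K)
        (Matrix.of fun a b => MvPolynomial.X (Sum.inl (a, b)))
        (fun i => MvPolynomial.X (Sum.inr (Sum.inl i)))
        (fun i => MvPolynomial.X (Sum.inr (Sum.inr i)))
        (j : ℕ)) := by
  classical
  have hn0 : 0 < n := hn
  set XX : Matrix (Fin n) (Fin n) (MvPolynomial ((Fin n × Fin n) ⊕ (Fin n) ⊕ (Fin n)) K) :=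
    Matrix.of fun a b => MvPolynomial.X (Sum.inl (a, b)) with hXX
  set LL : Fin n → MvPolynomial ((Fin n × Fin n) ⊕ (Fin n) ⊕ (Fin n)) K := fun i => MvPolynomial.X (Sum.inr (Sum.inl i)) with hLL
  set VV : Fin n → MvPolynomial ((Fin n × Fin n) ⊕ (Fin n) ⊕ (Fin n)) K := fun i => MvPolynomial.X (Sum.inr (Sum.inr i)) with hVV
  set fpoly : Fin n → MvPolynomial ((Fin n × Fin n) ⊕ (Fin n) ⊕ (Fin n)) K := fun j => fdef XX LL VV (j : ℕ) with hfpoly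
  set D : MvPolynomial ((Fin n × Fin n) ⊕ (Fin n) ⊕ (Fin n)) K := (g0m XX VV).det with hD
  set ψ : ((Fin n × Fin n) ⊕ (Fin n) ⊕ (Fin n)) → MvPolynomial (Fin n) K :=
    Sum.elim (fun pq => MvPolynomial.C (Jmat K n pq.1 pq.2))
      (Sum.elim (fun i => MvPolynomial.X i) (fun i => MvPolynomial.C (e0v K n i))) with hψ
  set G : MvPolynomial (Fin n) K := MvPolynomial.aeval ψ F with hG
  set F' : MvPolynomial ((Fin n × Fin n) ⊕ (Fin n) ⊕ (Fin n)) K := MvPolynomial.aeval fpoly G with hF'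
  -- evaluation of the generic fdef polynomials
  have hfd : ∀ (x : ((Fin n × Fin n) ⊕ (Fin n) ⊕ (Fin n)) → K) (k : ℕ), MvPolynomial.eval x (fdef XX LL VV k)
      = fdef (Matrix.of fun a b => x (Sum.inl (a, b)))
          (fun i => x (Sum.inr (Sum.inl i))) (fun i => x (Sum.inr (Sum.inr i))) k := by
    intro x k
    rw [map_fdef (MvPolynomial.eval x) XX LL VV k]
    congr 1
    · ext a b
      simp [hXX, Matrix.map_apply]
    · funext i; simp [hLL]
    · funext i; simp [hVV]
  -- evaluation of D
  have hDx : ∀ (x : ((Fin n × Fin n) ⊕ (Fin n) ⊕ (Fin n)) → K), MvPolynomial.eval x D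
      = (g0m (Matrix.of fun a b => x (Sum.inl (a, b))) (fun i => x (Sum.inr (Sum.inr i)))).det := by
    intro x
    have hXm : XX.map (MvPolynomial.eval x) = Matrix.of fun a b => x (Sum.inl (a, b)) := by
      ext a b; simp [hXX, Matrix.map_apply]
    have hVm : (MvPolynomial.eval x) ∘ VV = fun i => x (Sum.inr (Sum.inr i)) := by
      funext i; simp [hVV]
    rw [hD, RingHom.map_det, RingHom.mapMatrix_apply, map_g0m, hXm, hVm]
  -- evaluation of G
  have hGx : ∀ a : Fin n → K, MvPolynomial.eval a G
      = evP (Jmat K n) a (e0v K n) F := by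
    intro a
    have hfs : (fun s => (MvPolynomial.aeval a) (ψ s))
        = (Sum.elim (fun p : Fin n × Fin n => Jmat K n p.1 p.2) (Sum.elim a (e0v K n))) := by
      funext s
      rcases s with pq | s
      · simp [hψ]
      · rcases s with i | i <;> simp [hψ]
    rw [hG, ← aeval_eq_eval' a, MvPolynomial.comp_aeval_apply, aeval_eq_eval', hfs, evP]
  -- the main pointwise identity
  have keyx : ∀ x : ((Fin n × Fin n) ⊕ (Fin n) ⊕ (Fin n)) → K, MvPolynomial.eval x D ≠ 0 →
      MvPolynomial.eval x F = MvPolynomial.eval x F' := by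
    intro x hx0
    set Xx : Matrix (Fin n) (Fin n) K := Matrix.of fun a b => x (Sum.inl (a, b)) with hXx
    set lx : Fin n → K := fun i => x (Sum.inr (Sum.inl i)) with hlx
    set vx : Fin n → K := fun i => x (Sum.inr (Sum.inr i)) with hvx
    have hpt : (Sum.elim (fun p => Xx p.1 p.2) (Sum.elim lx vx)) = x := by
      funext s
      rcases s with pq | s
      · simp [hXx]
      · rcases s with i | i <;> rfl
    have hu : IsUnit (g0m Xx vx) := by
      rw [Matrix.isUnit_iff_isUnit_det, isUnit_iff_ne_zero]
      rw [hDx x] at hx0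
      exact hx0
    have hkey := key hn0 F hGL htrans Xx lx vx hu
    have e1 : MvPolynomial.eval x F = evP Xx lx vx F := by rw [evP, hpt]
    have e2 : MvPolynomial.eval x F' = evP (Jmat K n)
        (fun k : Fin n => fdef Xx lx vx (k : ℕ)) (e0v K n) F := by
      have hfj : (fun j : Fin n => (MvPolynomial.aeval x) (fpoly j))
          = (fun k : Fin n => fdef Xx lx vx (k : ℕ)) := by
        funext j
        rw [aeval_eq_eval', hfpoly]
        exact hfd x (j : ℕ)
      rw [hF', ← aeval_eq_eval' x, MvPolynomial.comp_aeval_apply, hfj, aeval_eq_eval']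
      exact hGx (fun k : Fin n => fdef Xx lx vx (k : ℕ))
    rw [e1, e2, hkey]
  -- D is a nonzero polynomial
  have hD0 : D ≠ 0 := by
    intro h0
    have h1 := hDx (Sum.elim (fun p : Fin n × Fin n => Jmat K n p.1 p.2) (Sum.elim (0 : Fin n → K) (e0v K n)))
    rw [h0] at h1
    simp only [map_zero] at h1
    have h2 : (Matrix.of fun a b =>
        (Sum.elim (fun p : Fin n × Fin n => Jmat K n p.1 p.2) (Sum.elim (0 : Fin n → K) (e0v K n)))
          (Sum.inl (a, b))) = Jmat K n := by
      ext a b; rfl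
    have h3 : (fun i => (Sum.elim (fun p : Fin n × Fin n => Jmat K n p.1 p.2)
        (Sum.elim (0 : Fin n → K) (e0v K n))) (Sum.inr (Sum.inr i))) = e0v K n := by
      funext i; rfl
    rw [h2, h3, g0m_Jmat hn0, Matrix.det_one] at h1
    exact one_ne_zero h1.symm
  have hDF : D * F = D * F' := by
    apply MvPolynomial.funext
    intro x
    rw [_root_.map_mul, _root_.map_mul]
    by_cases hx0 : MvPolynomial.eval x D = 0
    · rw [hx0, zero_mul, zero_mul]
    · rw [keyx x hx0]
  have hFF : F = F' := mul_left_cancel₀ hD0 hDF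
  rw [hFF]
  show F' ∈ Algebra.adjoin K (Set.range fpoly)
  rw [Algebra.adjoin_range_eq_range_aeval]
  exact ⟨G, rfl⟩
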